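/- Let M ⊆ B(H,K) be a ternary ring of operators such that I_H lies in the norm-closed linear span of M*M := {m*n : m,n ∈ M} and I_K lies in the norm-closed linear span of MM*. Let S ⊆ B(H) and T ⊆ B(K) be norm-closed subspaces with M S M* ⊆ T and M* T M ⊆ S. Then S equals the norm-closed linear span of M* T M and T equals the norm-closed linear span of M S M*. -/

import Mathlib

open ContinuousLinearMap

/-- if `M` is a TRO with `I_H` in the norm-closed span of `M*M` and
`I_K` in the norm-closed span of `MM*`, and `S, T` are norm-closed subspaces with
`M S M* ⊆ T` and `M* T M ⊆ S`, then `S` is the norm-closed span of `M* T M` and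
`T` is the norm-closed span of `M S M*`. -/
theorem stmt_5 {H K : Type*}
    [NormedAddCommGroup H] [InnerProductSpace ℂ H] [CompleteSpace H]
    [NormedAddCommGroup K] [InnerProductSpace ℂ K] [CompleteSpace K]
    (M : Submodule ℂ (H →L[ℂ] K))
    (hM : ∀ x ∈ M, ∀ y ∈ M, ∀ z ∈ M, x ∘L (adjoint y ∘L z) ∈ M)
    (hIH : ContinuousLinearMap.id ℂ H ∈
      (Submodule.span ℂ {x | ∃ m ∈ M, ∃ n ∈ M, x = adjoint m ∘L n}).topologicalClosure)
    (hIK : ContinuousLinearMap.id ℂ K ∈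
      (Submodule.span ℂ {x | ∃ m ∈ M, ∃ n ∈ M, x = m ∘L adjoint n}).topologicalClosure)
    (S : Submodule ℂ (H →L[ℂ] H)) (hSclosed : IsClosed (S : Set (H →L[ℂ] H)))
    (T : Submodule ℂ (K →L[ℂ] K)) (hTclosed : IsClosed (T : Set (K →L[ℂ] K)))
    (hMSM : ∀ m ∈ M, ∀ n ∈ M, ∀ s ∈ S, (m ∘L s) ∘L adjoint n ∈ T)
    (hMTM : ∀ m ∈ M, ∀ n ∈ M, ∀ t ∈ T, (adjoint m ∘L t) ∘L n ∈ S) :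
    S = (Submodule.span ℂ
          {x | ∃ m ∈ M, ∃ n ∈ M, ∃ t ∈ T, x = (adjoint m ∘L t) ∘L n}).topologicalClosure ∧
    T = (Submodule.span ℂ
          {x | ∃ m ∈ M, ∃ n ∈ M, ∃ s ∈ S, x = (m ∘L s) ∘L adjoint n}).topologicalClosure := by
  set P : Set (H →L[ℂ] H) := {x | ∃ m ∈ M, ∃ n ∈ M, x = adjoint m ∘L n} with hPdef
  set Q : Set (K →L[ℂ] K) := {x | ∃ m ∈ M, ∃ n ∈ M, x = m ∘L adjoint n} with hQdef
  set GS : Set (H →L[ℂ] H) :=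
    {x | ∃ m ∈ M, ∃ n ∈ M, ∃ t ∈ T, x = (adjoint m ∘L t) ∘L n} with hGSdef
  set GT : Set (K →L[ℂ] K) :=
    {x | ∃ m ∈ M, ∃ n ∈ M, ∃ s ∈ S, x = (m ∘L s) ∘L adjoint n} with hGTdef
  -- bilinear core for S
  have coreS : ∀ s ∈ S, ∀ x ∈ Submodule.span ℂ P, ∀ y ∈ Submodule.span ℂ P,
      (x ∘L s) ∘L y ∈ Submodule.span ℂ GS := by
    intro s hs x hx y hy
    induction hx, hy using Submodule.span_induction₂ with
    | mem_mem x y hx hy =>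
      obtain ⟨m, hm, n, hn, rfl⟩ := hx
      obtain ⟨p, hp, q, hq, rfl⟩ := hy
      apply Submodule.subset_span
      refine ⟨m, hm, q, hq, (n ∘L s) ∘L adjoint p, hMSM n hn p hp s hs, ?_⟩
      ext v; simp [ContinuousLinearMap.comp_apply]
    | zero_left y hy => simp
    | zero_right x hx => simp
    | add_left x y z hx hy hz h1 h2 =>
      simpa [ContinuousLinearMap.add_comp] using Submodule.add_mem _ h1 h2
    | add_right x y z hx hy hz h1 h2 =>
      simpa [ContinuousLinearMap.comp_add] using Submodule.add_mem _ h1 h2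
    | smul_left r x y hx hy h =>
      simpa [ContinuousLinearMap.smul_comp] using Submodule.smul_mem _ r h
    | smul_right r x y hx hy h =>
      simpa [ContinuousLinearMap.comp_smul] using Submodule.smul_mem _ r h
  -- bilinear core for T
  have coreT : ∀ t ∈ T, ∀ x ∈ Submodule.span ℂ Q, ∀ y ∈ Submodule.span ℂ Q,
      (x ∘L t) ∘L y ∈ Submodule.span ℂ GT := by
    intro t ht x hx y hy
    induction hx, hy using Submodule.span_induction₂ with
    | mem_mem x y hx hy =>
      obtain ⟨m, hm, n, hn, rfl⟩ := hx
      obtain ⟨p, hp, q, hq, rfl⟩ := hy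
      apply Submodule.subset_span
      refine ⟨m, hm, q, hq, (adjoint n ∘L t) ∘L p, hMTM n hn p hp t ht, ?_⟩
      ext v; simp [ContinuousLinearMap.comp_apply]
    | zero_left y hy => simp
    | zero_right x hx => simp
    | add_left x y z hx hy hz h1 h2 =>
      simpa [ContinuousLinearMap.add_comp] using Submodule.add_mem _ h1 h2
    | add_right x y z hx hy hz h1 h2 =>
      simpa [ContinuousLinearMap.comp_add] using Submodule.add_mem _ h1 h2
    | smul_left r x y hx hy h =>
      simpa [ContinuousLinearMap.smul_comp] using Submodule.smul_mem _ r h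
    | smul_right r x y hx hy h =>
      simpa [ContinuousLinearMap.comp_smul] using Submodule.smul_mem _ r h
  have hidH : ContinuousLinearMap.id ℂ H ∈ closure (Submodule.span ℂ P : Set _) := hIH
  have hidK : ContinuousLinearMap.id ℂ K ∈ closure (Submodule.span ℂ Q : Set _) := hIK
  -- step B for S
  have stepS : ∀ s ∈ S, ∀ x ∈ Submodule.span ℂ P,
      x ∘L s ∈ closure (Submodule.span ℂ GS : Set _) := by
    intro s hs x hx
    have hcont : Continuous fun y : H →L[ℂ] H => (x ∘L s) ∘L y :=
      ((ContinuousLinearMap.compL ℂ H H H) (x ∘L s)).continuous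
    have hmt : Set.MapsTo (fun y : H →L[ℂ] H => (x ∘L s) ∘L y)
        (Submodule.span ℂ P : Set _) (Submodule.span ℂ GS : Set _) :=
      fun y hy => coreS s hs x hx y hy
    have := (hmt.closure hcont) hidH
    simpa using this
  have stepT : ∀ t ∈ T, ∀ x ∈ Submodule.span ℂ Q,
      x ∘L t ∈ closure (Submodule.span ℂ GT : Set _) := by
    intro t ht x hx
    have hcont : Continuous fun y : K →L[ℂ] K => (x ∘L t) ∘L y :=
      ((ContinuousLinearMap.compL ℂ K K K) (x ∘L t)).continuous
    have hmt : Set.MapsTo (fun y : K →L[ℂ] K => (x ∘L t) ∘L y)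
        (Submodule.span ℂ Q : Set _) (Submodule.span ℂ GT : Set _) :=
      fun y hy => coreT t ht x hx y hy
    have := (hmt.closure hcont) hidK
    simpa using this
  have hSle : S ≤ (Submodule.span ℂ GS).topologicalClosure := by
    intro s hs
    have hcont : Continuous fun x : H →L[ℂ] H => x ∘L s :=
      ((ContinuousLinearMap.compL ℂ H H H).flip s).continuous
    have hmt : Set.MapsTo (fun x : H →L[ℂ] H => x ∘L s)
        (Submodule.span ℂ P : Set _) (closure (Submodule.span ℂ GS : Set _)) :=
      fun x hx => stepS s hs x hx
    have h2 := (hmt.closure hcont) hidH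
    rw [closure_closure] at h2
    exact (by simpa using h2 : s ∈ closure (Submodule.span ℂ GS : Set _))
  have hTle : T ≤ (Submodule.span ℂ GT).topologicalClosure := by
    intro t ht
    have hcont : Continuous fun x : K →L[ℂ] K => x ∘L t :=
      ((ContinuousLinearMap.compL ℂ K K K).flip t).continuous
    have hmt : Set.MapsTo (fun x : K →L[ℂ] K => x ∘L t)
        (Submodule.span ℂ Q : Set _) (closure (Submodule.span ℂ GT : Set _)) :=
      fun x hx => stepT t ht x hx
    have h2 := (hmt.closure hcont) hidK
    rw [closure_closure] at h2
    exact (by simpa using h2 : t ∈ closure (Submodule.span ℂ GT : Set _))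
  have hSge : (Submodule.span ℂ GS).topologicalClosure ≤ S := by
    apply Submodule.topologicalClosure_minimal
    · rw [Submodule.span_le]
      rintro x ⟨m, hm, n, hn, t, ht, rfl⟩
      exact hMTM m hm n hn t ht
    · exact hSclosed
  have hTge : (Submodule.span ℂ GT).topologicalClosure ≤ T := by
    apply Submodule.topologicalClosure_minimal
    · rw [Submodule.span_le]
      rintro x ⟨m, hm, n, hn, s, hs, rfl⟩
      exact hMSM m hm n hn s hs
    · exact hTclosed
  exact ⟨le_antisymm hSle hSge, le_antisymm hTle hTge⟩
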